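/- For every n ≥ 1 and all real numbers α, β with 0 < α < 1/(n+1) and 0 < β < 1/(n+1), the α-cross ♣_{n,α} is homeomorphic to the β-cross ♣_{n,β}. -/

import Mathlib

open scoped BigOperators

noncomputable section

/-- `Spx k` is the standard simplex on `k` coordinates, i.e. the standard simplex
`Δ_{k-1}` of the paper, as a subspace of `ℝ^k`. -/
abbrev Spx (k : ℕ) : Type := {x : Fin k → ℝ // x ∈ stdSimplex ℝ (Fin k)}

lemma perm_mem {k : ℕ} (ϑ : Equiv.Perm (Fin k)) {x : Fin k → ℝ}
    (hx : x ∈ stdSimplex ℝ (Fin k)) :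
    (fun i => x (ϑ i)) ∈ stdSimplex ℝ (Fin k) :=
  ⟨fun i => hx.1 (ϑ i), (Equiv.sum_comp ϑ x).trans hx.2⟩

/-- membership of `COMFORT (Δ_n)`: a self-homeomorphism of the standard simplex which
(i) respects coordinate permutations and (ii) keeps the order. -/
structure IsComfort {n : ℕ} (F : Spx (n+1) ≃ₜ Spx (n+1)) : Prop where
  perm : ∀ (ϑ : Equiv.Perm (Fin (n+1))) (x : Spx (n+1)),
      ((F ⟨fun i => x.1 (ϑ i), perm_mem ϑ x.2⟩ : Spx (n+1)) : Fin (n+1) → ℝ)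
        = fun i => (F x).1 (ϑ i)
  mono : ∀ (x : Spx (n+1)) (i j : Fin (n+1)), x.1 i ≤ x.1 j → (F x).1 i ≤ (F x).1 j

/-- the `α`-cross `♣_{n,α}` of `Δ_n`. -/
def cross (n : ℕ) (α : ℝ) : Set (Spx (n+1)) := {x | ∃ j, x.1 j = α}

/-- the boundary `BOU_n = ♣_{n,0}` of `Δ_n`. -/
def bou (n : ℕ) : Set (Spx (n+1)) := cross n 0

/-- the barycenter `Center_n` of `Δ_n`. -/
def center (n : ℕ) : Spx (n+1) :=
  ⟨fun _ => 1/((n:ℝ)+1), by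
    constructor
    · intro i
      positivity
    · rw [Finset.sum_const, Finset.card_univ, Fintype.card_fin, nsmul_eq_mul]
      push_cast
      field_simp⟩

/-- the minimal coordinate of a point of `Δ_n`. -/
def minCoord {n : ℕ} (x : Spx (n+1)) : ℝ :=
  Finset.univ.inf' Finset.univ_nonempty x.1

/-- the `α`-layer `Layer_{n,α}` of `Δ_n`. -/
def layer (n : ℕ) (α : ℝ) : Set (Spx (n+1)) := {x | minCoord x = α}

/-- `Sponge (Δ_n)`: the points of `Δ_n` with pairwise distinct coordinates. -/
def sponge (n : ℕ) : Set (Spx (n+1)) := {x | ∀ i j, x.1 i = x.1 j → i = j}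


namespace CrossHomeo


variable {k : ℕ}

/-- `M a x = ∑ j, min (x j) a`. -/
def Mf (a : ℝ) (x : Fin k → ℝ) : ℝ := ∑ j, min (x j) a

/-- scaling factor. -/
def sf (a b : ℝ) (x : Fin k → ℝ) : ℝ := (1 - (b/a) * Mf a x) / (1 - Mf a x)

/-- the map. -/
def Ff (a b : ℝ) (x : Fin k → ℝ) : Fin k → ℝ :=
  fun j => (b/a) * min (x j) a + sf a b x * max (x j - a) 0

variable {a b : ℝ} {x : Fin k → ℝ}

lemma Mf_nonneg (ha : 0 < a) (hx : x ∈ stdSimplex ℝ (Fin k)) : 0 ≤ Mf a x :=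
  Finset.sum_nonneg fun j _ => le_min (hx.1 j) ha.le

lemma Mf_le : Mf a x ≤ (k : ℝ) * a := by
  calc Mf a x ≤ ∑ _j : Fin k, a := Finset.sum_le_sum fun j _ => min_le_right _ _
  _ = (k : ℝ) * a := by simp [Finset.sum_const, mul_comm]

lemma Mf_lt_one (hka : (k : ℝ) * a < 1) : Mf a x < 1 := lt_of_le_of_lt Mf_le hka

lemma ba_Mf_lt_one (ha : 0 < a) (hb : 0 < b) (hkb : (k : ℝ) * b < 1) :
    (b/a) * Mf a x < 1 := by
  have h1 : (b/a) * Mf a x ≤ (b/a) * ((k:ℝ) * a) :=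
    mul_le_mul_of_nonneg_left Mf_le (div_nonneg hb.le ha.le)
  have h2 : (b/a) * ((k:ℝ) * a) = (k:ℝ) * b := by field_simp
  linarith

lemma sf_pos (ha : 0 < a) (hb : 0 < b) (hka : (k : ℝ) * a < 1) (hkb : (k : ℝ) * b < 1) :
    0 < sf a b x := by
  have h1 := Mf_lt_one (x := x) hka
  have h2 := ba_Mf_lt_one (x := x) ha hb hkb
  exact div_pos (by linarith) (by linarith)

lemma sum_max (hx : x ∈ stdSimplex ℝ (Fin k)) :
    ∑ j, max (x j - a) 0 = 1 - Mf a x := by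
  have h : ∀ j : Fin k, max (x j - a) 0 = x j - min (x j) a := by
    intro j
    rcases le_total (x j) a with h | h
    · rw [max_eq_right (by linarith), min_eq_left h]; ring
    · rw [max_eq_left (by linarith), min_eq_right h]
  simp only [h]
  rw [Finset.sum_sub_distrib, hx.2, Mf]

lemma Ff_mem (ha : 0 < a) (hb : 0 < b) (hka : (k : ℝ) * a < 1) (hkb : (k : ℝ) * b < 1)
    (hx : x ∈ stdSimplex ℝ (Fin k)) : Ff a b x ∈ stdSimplex ℝ (Fin k) := by
  constructor
  · intro j
    have hs := sf_pos (x := x) ha hb hka hkb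
    have h1 : 0 ≤ min (x j) a := le_min (hx.1 j) ha.le
    have h2 : (0:ℝ) ≤ max (x j - a) 0 := le_max_right _ _
    show 0 ≤ (b/a) * min (x j) a + sf a b x * max (x j - a) 0
    exact add_nonneg (mul_nonneg (div_nonneg hb.le ha.le) h1) (mul_nonneg hs.le h2)
  · have hM1 : Mf a x < 1 := Mf_lt_one hka
    simp only [Ff]
    rw [Finset.sum_add_distrib, ← Finset.mul_sum, ← Finset.mul_sum, sum_max hx, Mf]
    rw [sf, Mf, div_mul_cancel₀ _ (by rw [← Mf]; linarith : (1 : ℝ) - ∑ j, min (x j) a ≠ 0)]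
    ring

lemma min_Ff (ha : 0 < a) (hb : 0 < b) (hka : (k : ℝ) * a < 1) (hkb : (k : ℝ) * b < 1)
    (hx : x ∈ stdSimplex ℝ (Fin k)) (j : Fin k) :
    min (Ff a b x j) b = (b/a) * min (x j) a := by
  have hs := sf_pos (x := x) ha hb hka hkb
  rcases le_total (x j) a with h | h
  · have hmax : max (x j - a) 0 = 0 := max_eq_right (by linarith)
    have hle : (b/a) * x j ≤ b := by
      have := mul_le_mul_of_nonneg_left h (div_nonneg hb.le ha.le)
      rwa [div_mul_cancel₀ _ ha.ne'] at this
    rw [Ff, hmax, min_eq_left h, mul_zero, add_zero, min_eq_left hle]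
  · have hmin : min (x j) a = a := min_eq_right h
    have hmax : max (x j - a) 0 = x j - a := max_eq_left (by linarith)
    have hba : (b/a) * a = b := div_mul_cancel₀ _ ha.ne'
    have hge : b ≤ (b/a) * a + sf a b x * (x j - a) := by
      rw [hba]; nlinarith
    rw [Ff, hmin, hmax, min_eq_right hge, hba]

lemma max_Ff (ha : 0 < a) (hb : 0 < b) (hka : (k : ℝ) * a < 1) (hkb : (k : ℝ) * b < 1)
    (hx : x ∈ stdSimplex ℝ (Fin k)) (j : Fin k) :
    max (Ff a b x j - b) 0 = sf a b x * max (x j - a) 0 := by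
  have hs := sf_pos (x := x) ha hb hka hkb
  rcases le_total (x j) a with h | h
  · have hmax : max (x j - a) 0 = 0 := max_eq_right (by linarith)
    have hle : (b/a) * x j ≤ b := by
      have := mul_le_mul_of_nonneg_left h (div_nonneg hb.le ha.le)
      rwa [div_mul_cancel₀ _ ha.ne'] at this
    rw [Ff, hmax, min_eq_left h, mul_zero, add_zero, max_eq_right (by linarith)]
  · have hmin : min (x j) a = a := min_eq_right h
    have hmax : max (x j - a) 0 = x j - a := max_eq_left (by linarith)
    have hba : (b/a) * a = b := div_mul_cancel₀ _ ha.ne'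
    rw [Ff, hmin, hmax, hba, max_eq_left (by nlinarith)]
    ring

lemma Mf_Ff (ha : 0 < a) (hb : 0 < b) (hka : (k : ℝ) * a < 1) (hkb : (k : ℝ) * b < 1)
    (hx : x ∈ stdSimplex ℝ (Fin k)) :
    Mf b (Ff a b x) = (b/a) * Mf a x := by
  rw [Mf, Mf, Finset.mul_sum]
  exact Finset.sum_congr rfl fun j _ => min_Ff ha hb hka hkb hx j

lemma sf_Ff (ha : 0 < a) (hb : 0 < b) (hka : (k : ℝ) * a < 1) (hkb : (k : ℝ) * b < 1)
    (hx : x ∈ stdSimplex ℝ (Fin k)) :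
    sf b a (Ff a b x) * sf a b x = 1 := by
  have hM1 : Mf a x < 1 := Mf_lt_one hka
  have hM2 : (b/a) * Mf a x < 1 := ba_Mf_lt_one ha hb hkb
  rw [sf, sf, Mf_Ff ha hb hka hkb hx]
  have h1 : 1 - (a/b) * ((b/a) * Mf a x) = 1 - Mf a x := by
    field_simp
  rw [h1]
  rw [div_mul_div_comm]
  rw [div_eq_one_iff_eq (by nlinarith : (1 - (b/a) * Mf a x) * (1 - Mf a x) ≠ 0)]
  ring

lemma left_inv_Ff (ha : 0 < a) (hb : 0 < b) (hka : (k : ℝ) * a < 1) (hkb : (k : ℝ) * b < 1)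
    (hx : x ∈ stdSimplex ℝ (Fin k)) :
    Ff b a (Ff a b x) = x := by
  funext j
  have hS := sf_Ff (x := x) ha hb hka hkb hx
  have key : min (x j) a + max (x j - a) 0 = x j := by
    rcases le_total (x j) a with h | h
    · rw [min_eq_left h, max_eq_right (by linarith)]; ring
    · rw [min_eq_right h, max_eq_left (by linarith)]; ring
  calc Ff b a (Ff a b x) j
      = (a/b) * min (Ff a b x j) b + sf b a (Ff a b x) * max (Ff a b x j - b) 0 := rfl
    _ = (a/b) * ((b/a) * min (x j) a)
        + sf b a (Ff a b x) * (sf a b x * max (x j - a) 0) := by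
        rw [min_Ff ha hb hka hkb hx j, max_Ff ha hb hka hkb hx j]
    _ = min (x j) a + max (x j - a) 0 := by
        rw [← mul_assoc, ← mul_assoc, hS, one_mul]
        rw [div_mul_div_comm, mul_comm a b, div_self (by positivity), one_mul]
    _ = x j := key

lemma continuous_Ff (ha : 0 < a) (hka : (k : ℝ) * a < 1) :
    Continuous (fun x : {x : Fin k → ℝ // x ∈ stdSimplex ℝ (Fin k)} => Ff a b x.1) := by
  have hMcont : Continuous (fun x : {x : Fin k → ℝ // x ∈ stdSimplex ℝ (Fin k)} => Mf a x.1) :=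
    continuous_finset_sum _ fun j _ =>
      ((continuous_apply j).comp continuous_subtype_val).min continuous_const
  have hscont : Continuous
      (fun x : {x : Fin k → ℝ // x ∈ stdSimplex ℝ (Fin k)} => sf a b x.1) := by
    apply Continuous.div (by fun_prop) (by fun_prop)
    intro x
    have := Mf_lt_one (x := x.1) hka
    intro h; linarith [h]
  apply continuous_pi
  intro j
  have hxj : Continuous
      (fun x : {x : Fin k → ℝ // x ∈ stdSimplex ℝ (Fin k)} => x.1 j) :=
    (continuous_apply j).comp continuous_subtype_val
  exact ((continuous_const.mul (hxj.min continuous_const))).add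
    (hscont.mul ((hxj.sub continuous_const).max continuous_const))


lemma Ff_apply_eq {a b : ℝ} {x : Fin k → ℝ} {j : Fin k} (ha : 0 < a) (h : x j = a) :
    Ff a b x j = b := by
  simp [Ff, h, div_mul_cancel₀ b ha.ne']

end CrossHomeo

open CrossHomeo in
theorem cross_homeomorphic_cross (n : ℕ) (hn : 1 ≤ n) (α β : ℝ)
    (hα0 : 0 < α) (hα1 : α < 1/((n:ℝ)+1))
    (hβ0 : 0 < β) (hβ1 : β < 1/((n:ℝ)+1)) :
    Nonempty (↥(cross n α) ≃ₜ ↥(cross n β)) := by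
  have hpos : (0:ℝ) < (n:ℝ) + 1 := by positivity
  have hka : ((n+1 : ℕ) : ℝ) * α < 1 := by
    push_cast
    rw [mul_comm]
    calc α * ((n:ℝ)+1) < (1/((n:ℝ)+1)) * ((n:ℝ)+1) := by
          exact mul_lt_mul_of_pos_right hα1 hpos
      _ = 1 := by field_simp
  have hkb : ((n+1 : ℕ) : ℝ) * β < 1 := by
    push_cast
    rw [mul_comm]
    calc β * ((n:ℝ)+1) < (1/((n:ℝ)+1)) * ((n:ℝ)+1) := by
          exact mul_lt_mul_of_pos_right hβ1 hpos
      _ = 1 := by field_simp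
  let E : Spx (n+1) ≃ₜ Spx (n+1) :=
    { toFun := fun x => ⟨Ff α β x.1, Ff_mem hα0 hβ0 hka hkb x.2⟩
      invFun := fun x => ⟨Ff β α x.1, Ff_mem hβ0 hα0 hkb hka x.2⟩
      left_inv := fun x => Subtype.ext (left_inv_Ff hα0 hβ0 hka hkb x.2)
      right_inv := fun x => Subtype.ext (left_inv_Ff hβ0 hα0 hkb hka x.2)
      continuous_toFun := (continuous_Ff hα0 hka).subtype_mk _
      continuous_invFun := (continuous_Ff hβ0 hkb).subtype_mk _ }
  have himg : E '' cross n α = cross n β := by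
    ext y
    constructor
    · rintro ⟨x, ⟨j, hj⟩, rfl⟩
      exact ⟨j, Ff_apply_eq hα0 hj⟩
    · rintro ⟨j, hj⟩
      refine ⟨E.symm y, ⟨j, ?_⟩, E.apply_symm_apply y⟩
      exact Ff_apply_eq hβ0 hj
  exact ⟨(E.image (cross n α)).trans (Homeomorph.setCongr himg)⟩


end
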